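/- Let w : ℝ² → ℝ be a bounded differentiable function whose gradient is bounded, with ‖w‖∞ = sup_{z∈ℝ²} |w(z)| and ‖∇w‖∞ = sup_{z∈ℝ²} ‖∇w(z)‖₂. Let I be a finite index set and, for each i ∈ I, let u_i = (a_i, b_i) and v_i = (c_i, d_i) be points of ℝ² with a_i ≤ b_i and c_i ≤ d_i, and set L = max_{i∈I} max{b_i − a_i, d_i − c_i}. Let β₁(t) = Σ_{i∈I} w(u_i)·χ_{[a_i,b_i)}(t) and β₂(t) = Σ_{i∈I} w(v_i)·χ_{[c_i,d_i)}(t). Fix an equally spaced grid t₁ < t₂ < ⋯ < t_d with Δt = t_{k+1} − t_k constant, and define the vectors of averaged Bettis 𝛃₁, 𝛃₂ ∈ ℝ^{d−1} with k-th components (1/Δt)∫_{t_k}^{t_{k+1}} β₁(t) dt and (1/Δt)∫_{t_k}^{t_{k+1}} β₂(t) dt respectively. Then ‖𝛃₁ − 𝛃₂‖₁ ≤ (1/Δt)·(‖w‖∞ + L·‖∇w‖∞) · Σ_{i∈I} ‖u_i − v_i‖₁. -/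

import Mathlib

open MeasureTheory

/-- The indicator function of the half-open interval `[a, b)`. -/
noncomputable def chiIco (a b t : ℝ) : ℝ :=
  Set.indicator (Set.Ico a b) (fun _ => (1 : ℝ)) t

/-- The point `(a, b)` viewed as an element of the Euclidean plane `ℝ²`. -/
noncomputable def pt (a b : ℝ) : EuclideanSpace ℝ (Fin 2) :=
  (WithLp.equiv 2 (Fin 2 → ℝ)).symm ![a, b]

lemma chi_nonneg (a b t : ℝ) : 0 ≤ chiIco a b t :=
  Set.indicator_nonneg (fun _ _ => zero_le_one) t

lemma chi_integrable (a b : ℝ) : Integrable (chiIco a b) := by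
  unfold chiIco
  rw [integrable_indicator_iff measurableSet_Ico]
  exact integrableOn_const measure_Ico_lt_top.ne

lemma integral_chi {a b : ℝ} (h : a ≤ b) : ∫ t, chiIco a b t = b - a := by
  unfold chiIco
  rw [MeasureTheory.integral_indicator_const _ measurableSet_Ico]
  simp [Real.volume_Ico, ENNReal.toReal_ofReal (sub_nonneg.2 h), h]

lemma norm_pt_sub (a b c d : ℝ) : ‖pt a b - pt c d‖ ≤ |a - c| + |b - d| := by
  have h : pt a b - pt c d = pt (a - c) (b - d) := by
    unfold pt
    ext i
    fin_cases i <;> simp [WithLp.equiv_symm_apply, PiLp.toLp_apply]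
  rw [h, pt, EuclideanSpace.norm_eq]
  have : √(∑ i, ‖(WithLp.equiv 2 (Fin 2 → ℝ)).symm ![a - c, b - d] i‖ ^ 2)
      = √(|a - c| ^ 2 + |b - d| ^ 2) := by
    congr 1
    simp [Fin.sum_univ_two, WithLp.equiv_symm_apply, PiLp.toLp_apply, Real.norm_eq_abs]
  rw [this]
  have h2 : |a - c| ^ 2 + |b - d| ^ 2 ≤ (|a - c| + |b - d|) ^ 2 := by nlinarith [abs_nonneg (a - c), abs_nonneg (b - d), mul_nonneg (abs_nonneg (a-c)) (abs_nonneg (b-d))]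
  calc √(|a - c| ^ 2 + |b - d| ^ 2) ≤ √((|a - c| + |b - d|) ^ 2) := Real.sqrt_le_sqrt h2
    _ = |a - c| + |b - d| := Real.sqrt_sq (by positivity)

lemma abs_chi_sub_chi (a b c d t : ℝ) :
    |chiIco a b t - chiIco c d t|
      ≤ chiIco (min a c) (max a c) t + chiIco (min b d) (max b d) t := by
  unfold chiIco
  simp only [Set.indicator_apply, Set.mem_Ico]
  split_ifs with h1 h2 h3 h4 h5 h6 h7 h8 h9 h10 h11 h12 <;> try norm_num
  · rcases lt_or_ge t c with hc | hc
    · exact h6 ⟨(min_le_left a c).trans h1.1, hc.trans_le (le_max_right a c)⟩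
    · have hd : d ≤ t := le_of_not_gt fun hd => h2 ⟨hc, hd⟩
      exact h8 ⟨(min_le_right b d).trans hd, h1.2.trans_le (le_max_left b d)⟩
  · rcases lt_or_ge t a with ha | ha
    · exact h10 ⟨(min_le_right a c).trans h9.1, ha.trans_le (le_max_left a c)⟩
    · have hb : b ≤ t := le_of_not_gt fun hb => h1 ⟨ha, hb⟩
      exact h12 ⟨(min_le_left b d).trans hb, h9.2.trans_le (le_max_right b d)⟩

lemma w_lip {w : EuclideanSpace ℝ (Fin 2) → ℝ} {Wg : ℝ}
    (hdiff : Differentiable ℝ w) (hWg : ∀ z, ‖gradient w z‖ ≤ Wg)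
    (u v : EuclideanSpace ℝ (Fin 2)) : |w u - w v| ≤ Wg * ‖u - v‖ := by
  have hf : ∀ z, ‖fderiv ℝ w z‖ ≤ Wg := by
    intro z
    have := hWg z
    rwa [gradient, LinearIsometryEquiv.norm_map] at this
  have := convex_univ.norm_image_sub_le_of_norm_fderiv_le
    (fun x _ => (hdiff x)) (fun x _ => hf x) (Set.mem_univ v) (Set.mem_univ u)
  simpa [Real.norm_eq_abs] using this

lemma key_bound {w : EuclideanSpace ℝ (Fin 2) → ℝ} {W Wg : ℝ}
    (hdiff : Differentiable ℝ w) (hW : ∀ z, |w z| ≤ W)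
    (hWg : ∀ z, ‖gradient w z‖ ≤ Wg)
    (a b c d L : ℝ) (hab : a ≤ b) (hcd : c ≤ d)
    (hL1 : b - a ≤ L) (hWg0 : 0 ≤ Wg) :
    ∫ t, |w (pt a b) * chiIco a b t - w (pt c d) * chiIco c d t|
      ≤ (W + L * Wg) * (|a - c| + |b - d|) := by
  set u := pt a b
  set v := pt c d
  have hpw : ∀ t, |w u * chiIco a b t - w v * chiIco c d t|
      ≤ |w u - w v| * chiIco a b t
        + |w v| * (chiIco (min a c) (max a c) t + chiIco (min b d) (max b d) t) := by
    intro t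
    have h0 : w u * chiIco a b t - w v * chiIco c d t
        = (w u - w v) * chiIco a b t + w v * (chiIco a b t - chiIco c d t) := by ring
    rw [h0]
    calc |(w u - w v) * chiIco a b t + w v * (chiIco a b t - chiIco c d t)|
        ≤ |(w u - w v) * chiIco a b t| + |w v * (chiIco a b t - chiIco c d t)| :=
          abs_add_le _ _
      _ = |w u - w v| * chiIco a b t + |w v| * |chiIco a b t - chiIco c d t| := by
          rw [abs_mul, abs_mul, abs_of_nonneg (chi_nonneg a b t)]
      _ ≤ |w u - w v| * chiIco a b t
          + |w v| * (chiIco (min a c) (max a c) t + chiIco (min b d) (max b d) t) :=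
          add_le_add_right
            (mul_le_mul_of_nonneg_left (abs_chi_sub_chi a b c d t) (abs_nonneg _)) _
  have hint1 : Integrable (fun t => |w u * chiIco a b t - w v * chiIco c d t|) :=
    (((chi_integrable a b).const_mul _).sub ((chi_integrable c d).const_mul _)).abs
  have hA : Integrable (fun t => |w u - w v| * chiIco a b t) :=
    (chi_integrable a b).const_mul _
  have hC : Integrable (fun t => chiIco (min a c) (max a c) t
      + chiIco (min b d) (max b d) t) := (chi_integrable _ _).add (chi_integrable _ _)
  have hB : Integrable (fun t => |w v| * (chiIco (min a c) (max a c) t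
      + chiIco (min b d) (max b d) t)) := hC.const_mul _
  have hS : (0:ℝ) ≤ |a - c| + |b - d| := by positivity
  calc ∫ t, |w u * chiIco a b t - w v * chiIco c d t|
      ≤ ∫ t, (|w u - w v| * chiIco a b t
          + |w v| * (chiIco (min a c) (max a c) t + chiIco (min b d) (max b d) t)) :=
        integral_mono hint1 (hA.add hB) hpw
    _ = |w u - w v| * (b - a) + |w v| * ((max a c - min a c) + (max b d - min b d)) := by
        rw [integral_add hA hB, integral_const_mul, integral_const_mul,
          integral_add (chi_integrable _ _) (chi_integrable _ _),
          integral_chi hab, integral_chi (min_le_max), integral_chi (min_le_max)]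
    _ = |w u - w v| * (b - a) + |w v| * (|a - c| + |b - d|) := by
        rw [max_sub_min_eq_abs, max_sub_min_eq_abs, abs_sub_comm c a, abs_sub_comm d b]
    _ ≤ (Wg * (|a - c| + |b - d|)) * L + W * (|a - c| + |b - d|) := by
        have e0 : |w u - w v| ≤ Wg * (|a - c| + |b - d|) :=
          (w_lip hdiff hWg u v).trans
            (mul_le_mul_of_nonneg_left (norm_pt_sub a b c d) hWg0)
        have e1 : |w u - w v| * (b - a) ≤ (Wg * (|a - c| + |b - d|)) * L :=
          mul_le_mul e0 hL1 (by linarith) (by positivity)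
        have e2 : |w v| * (|a - c| + |b - d|) ≤ W * (|a - c| + |b - d|) :=
          mul_le_mul_of_nonneg_right (hW v) hS
        linarith
    _ = (W + L * Wg) * (|a - c| + |b - d|) := by ring

/-- **Stability of the vector of averaged Bettis (Corollary 1).** Let `w : ℝ² → ℝ` be a
bounded differentiable function with bounded gradient (`W` bounds `|w|`, `Wg` bounds the
Euclidean norm of `∇w`). Given a matching `i ↦ ((aᵢ, bᵢ), (cᵢ, dᵢ))` between two
persistence diagrams with `aᵢ ≤ bᵢ`, `cᵢ ≤ dᵢ` and `L ≥ max (bᵢ - aᵢ) (dᵢ - cᵢ)` for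
all `i`, form the Betti functions `β₁(t) = Σᵢ w(aᵢ,bᵢ)·χ_{[aᵢ,bᵢ)}(t)`,
`β₂(t) = Σᵢ w(cᵢ,dᵢ)·χ_{[cᵢ,dᵢ)}(t)`. For an equally spaced grid `T 0 < T 1 < ⋯ < T (n-1)`
with spacing `Δt > 0`, the vectors of averaged Bettis, with `k`-th components
`(1/Δt)·∫_{T k}^{T (k+1)} βⱼ(t) dt` for `k = 0, …, n-2`, satisfy
`‖𝛃₁ − 𝛃₂‖₁ ≤ (1/Δt)·(W + L·Wg)·Σᵢ (|aᵢ − cᵢ| + |bᵢ − dᵢ|)`. -/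
theorem vab_stability
    (w : EuclideanSpace ℝ (Fin 2) → ℝ) (W Wg : ℝ)
    (hdiff : Differentiable ℝ w)
    (hW : ∀ z, |w z| ≤ W)
    (hWg : ∀ z, ‖gradient w z‖ ≤ Wg)
    (ι : Type*) [Fintype ι]
    (a b c d : ι → ℝ)
    (hab : ∀ i, a i ≤ b i) (hcd : ∀ i, c i ≤ d i)
    (L : ℝ) (hL : ∀ i, max (b i - a i) (d i - c i) ≤ L)
    (n : ℕ) (hn : 2 ≤ n) (T : ℕ → ℝ) (Δt : ℝ) (hΔt : 0 < Δt)
    (hT : ∀ k, T (k + 1) = T k + Δt) :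
    ∑ k ∈ Finset.range (n - 1),
        |(1 / Δt) * (∫ t in T k..T (k + 1),
            ∑ i, w (pt (a i) (b i)) * chiIco (a i) (b i) t)
          - (1 / Δt) * ∫ t in T k..T (k + 1),
            ∑ i, w (pt (c i) (d i)) * chiIco (c i) (d i) t|
      ≤ (1 / Δt) * ((W + L * Wg) * ∑ i, (|a i - c i| + |b i - d i|)) := by
  rcases isEmpty_or_nonempty ι with hι | hι
  · simp
  -- notation
  set f : ι → ℝ → ℝ := fun i t => w (pt (a i) (b i)) * chiIco (a i) (b i) t with hf
  set g : ι → ℝ → ℝ := fun i t => w (pt (c i) (d i)) * chiIco (c i) (d i) t with hg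
  have hΔ0 : (0:ℝ) ≤ 1 / Δt := by positivity
  have hfint : ∀ i, Integrable (f i) := fun i => (chi_integrable _ _).const_mul _
  have hgint : ∀ i, Integrable (g i) := fun i => (chi_integrable _ _).const_mul _
  have hdint : ∀ i, Integrable (fun t => |f i t - g i t|) :=
    fun i => ((hfint i).sub (hgint i)).abs
  have hFint : Integrable (fun t => ∑ i, f i t) :=
    integrable_finset_sum _ (fun i _ => hfint i)
  have hGint : Integrable (fun t => ∑ i, g i t) :=
    integrable_finset_sum _ (fun i _ => hgint i)
  have hTle : ∀ k, T k ≤ T (k + 1) := fun k => by rw [hT k]; linarith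
  -- per-k bound
  have step1 : ∀ k,
      |(1 / Δt) * (∫ t in T k..T (k + 1), ∑ i, f i t)
        - (1 / Δt) * ∫ t in T k..T (k + 1), ∑ i, g i t|
      ≤ (1 / Δt) * ∑ i, ∫ t in T k..T (k + 1), |f i t - g i t| := by
    intro k
    rw [← mul_sub, abs_mul, abs_of_nonneg hΔ0]
    apply mul_le_mul_of_nonneg_left _ hΔ0
    rw [← intervalIntegral.integral_sub hFint.intervalIntegrable hGint.intervalIntegrable]
    calc |∫ t in T k..T (k + 1), (∑ i, f i t) - ∑ i, g i t|
        ≤ ∫ t in T k..T (k + 1), |(∑ i, f i t) - ∑ i, g i t| :=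
          intervalIntegral.abs_integral_le_integral_abs (hTle k)
      _ ≤ ∫ t in T k..T (k + 1), ∑ i, |f i t - g i t| := by
          apply intervalIntegral.integral_mono_on (hTle k)
            (hFint.sub hGint).abs.intervalIntegrable
            (integrable_finset_sum _ (fun i _ => hdint i)).intervalIntegrable
          intro t _
          simpa [Finset.sum_sub_distrib] using
            Finset.abs_sum_le_sum_abs (fun i => f i t - g i t) Finset.univ
      _ = ∑ i, ∫ t in T k..T (k + 1), |f i t - g i t| :=
          intervalIntegral.integral_finset_sum
            (fun i _ => (hdint i).intervalIntegrable)
  -- sum over k, swap, telescope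
  have step2 : ∀ i, ∑ k ∈ Finset.range (n - 1), ∫ t in T k..T (k + 1), |f i t - g i t|
      ≤ ∫ t, |f i t - g i t| := by
    intro i
    rw [intervalIntegral.sum_integral_adjacent_intervals
      (fun k _ => (hdint i).intervalIntegrable)]
    have hT0 : T 0 ≤ T (n - 1) := by
      have : ∀ m, T 0 ≤ T m := by
        intro m
        induction m with
        | zero => exact le_refl _
        | succ m ih => exact ih.trans (hTle m)
      exact this _
    rw [intervalIntegral.integral_of_le hT0]
    exact setIntegral_le_integral (hdint i)
      (Filter.Eventually.of_forall fun t => abs_nonneg _)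
  -- per-i whole-line bound
  have hW0 : (0:ℝ) ≤ W := (abs_nonneg _).trans (hW (pt 0 0))
  have hWg0 : (0:ℝ) ≤ Wg := (norm_nonneg _).trans (hWg (pt 0 0))
  have step3 : ∀ i, ∫ t, |f i t - g i t|
      ≤ (W + L * Wg) * (|a i - c i| + |b i - d i|) := fun i =>
    key_bound hdiff hW hWg (a i) (b i) (c i) (d i) L (hab i) (hcd i)
      ((le_max_left _ _).trans (hL i)) hWg0
  calc ∑ k ∈ Finset.range (n - 1),
        |(1 / Δt) * (∫ t in T k..T (k + 1), ∑ i, f i t)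
          - (1 / Δt) * ∫ t in T k..T (k + 1), ∑ i, g i t|
      ≤ ∑ k ∈ Finset.range (n - 1),
          (1 / Δt) * ∑ i, ∫ t in T k..T (k + 1), |f i t - g i t| :=
        Finset.sum_le_sum (fun k _ => step1 k)
    _ = (1 / Δt) * ∑ i, ∑ k ∈ Finset.range (n - 1),
          ∫ t in T k..T (k + 1), |f i t - g i t| := by
        rw [← Finset.mul_sum, Finset.sum_comm]
    _ ≤ (1 / Δt) * ∑ i, ∫ t, |f i t - g i t| := by
        apply mul_le_mul_of_nonneg_left _ hΔ0
        exact Finset.sum_le_sum (fun i _ => step2 i)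
    _ ≤ (1 / Δt) * ((W + L * Wg) * ∑ i, (|a i - c i| + |b i - d i|)) := by
        apply mul_le_mul_of_nonneg_left _ hΔ0
        rw [Finset.mul_sum]
        exact Finset.sum_le_sum (fun i _ => step3 i)
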